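/- With L_{n,l}^{α,β} as defined (Stancu-type q-Bernstein-Schurer-Kantorovich operator), for all x ∈ [0,1]: L_{n,l}^{α,β}(t;q;x) = α/([n+1]_q+β) + 1/(([n+1]_q+β)[2]_q) + (2q[n+l]_q)/(([n+1]_q+β)[2]_q) · x. -/

import Mathlib

noncomputable section

/-- q-integer [n]_q = (1-q^n)/(1-q). -/
def qInt (q : ℝ) (n : ℕ) : ℝ := (1 - q ^ n) / (1 - q)

/-- q-factorial [n]_q!. -/
def qFact (q : ℝ) (n : ℕ) : ℝ := ∏ i ∈ Finset.range n, qInt q (i + 1)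

/-- q-binomial coefficient. -/
def qBinom (q : ℝ) (n k : ℕ) : ℝ := qFact q n / (qFact q k * qFact q (n - k))

/-- q-analogue (1-x)_q^m = ∏_{j<m} (1 - q^j x). -/
def qPoch (q x : ℝ) (m : ℕ) : ℝ := ∏ j ∈ Finset.range m, (1 - q ^ j * x)

/-- Riemann-type q-integral over [a,b]. -/
def qRInt (q a b : ℝ) (f : ℝ → ℝ) : ℝ :=
  (1 - q) * (b - a) * ∑' s : ℕ, f (a + (b - a) * q ^ s) * q ^ s

/-- q-Bernstein-Schurer basis function b_{n,l}^k(q;x). -/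
def bern (q : ℝ) (n l k : ℕ) (x : ℝ) : ℝ :=
  qBinom q (n + l) k * x ^ k * qPoch q x (n + l - k)

/-- Stancu-type q-Bernstein-Schurer-Kantorovich operator. -/
def Lop (q α β : ℝ) (n l : ℕ) (f : ℝ → ℝ) (x : ℝ) : ℝ :=
  (qInt q (n + 1) + β) * ∑ k ∈ Finset.range (n + l + 1),
    bern q n l k x * (q ^ k)⁻¹ *
      qRInt q ((qInt q k + α) / (qInt q (n + 1) + β))
        ((qInt q (k + 1) + α) / (qInt q (n + 1) + β)) f

variable {q x : ℝ}

lemma qInt_pos (hq : 0 < q) (hq1 : q < 1) (n : ℕ) (hn : 0 < n) : 0 < qInt q n := by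
  have h1 : q ^ n < 1 := pow_lt_one₀ hq.le hq1 hn.ne'
  exact div_pos (by linarith) (by linarith)

lemma qFact_pos (hq : 0 < q) (hq1 : q < 1) (n : ℕ) : 0 < qFact q n :=
  Finset.prod_pos fun i _ => qInt_pos hq hq1 _ (Nat.succ_pos i)

lemma qInt_add (hq1 : q ≠ 1) (a b : ℕ) : qInt q (a + b) = qInt q a + q ^ a * qInt q b := by
  unfold qInt
  have h : (1:ℝ) - q ≠ 0 := sub_ne_zero.mpr (by exact fun h => hq1 h.symm)
  field_simp
  rw [pow_add]; ring

lemma qFact_succ (n : ℕ) : qFact q (n+1) = qFact q n * qInt q (n+1) :=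
  Finset.prod_range_succ _ _

lemma qBinom_zero (hq : 0 < q) (hq1 : q < 1) (m : ℕ) : qBinom q m 0 = 1 := by
  unfold qBinom
  rw [Nat.sub_zero, show qFact q 0 = 1 by simp [qFact], one_mul,
    div_self (qFact_pos hq hq1 m).ne']

lemma qBinom_self (hq : 0 < q) (hq1 : q < 1) (m : ℕ) : qBinom q m m = 1 := by
  unfold qBinom
  simp [Nat.sub_self]
  have : qFact q 0 = 1 := by simp [qFact]
  rw [this]
  field_simp [((qFact_pos hq hq1 m).ne')]

lemma qBinom_pascal (hq : 0 < q) (hq1 : q < 1) (k d : ℕ) :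
    qBinom q (k+d+2) (k+1) = qBinom q (k+d+1) (k+1) + q^(d+1) * qBinom q (k+d+1) k := by
  unfold qBinom
  rw [show k+d+2-(k+1) = d+1 by omega, show k+d+1-(k+1) = d by omega,
    show k+d+1-k = d+1 by omega]
  rw [show k+d+2 = (k+d+1)+1 by omega, qFact_succ, qFact_succ (n:=d), qFact_succ (n:=k)]
  have hk := (qFact_pos hq hq1 k).ne'
  have hd := (qFact_pos hq hq1 d).ne'
  have hm := (qFact_pos hq hq1 (k+d+1)).ne'
  have hik := (qInt_pos hq hq1 (k+1) (Nat.succ_pos k)).ne'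
  have hid := (qInt_pos hq hq1 (d+1) (Nat.succ_pos d)).ne'
  have key : qInt q (k+d+2) = qInt q (d+1) + q^(d+1) * qInt q (k+1) := by
    rw [show k+d+2 = (d+1)+(k+1) by omega]; exact qInt_add hq1.ne (d+1) (k+1)
  field_simp
  rw [key]; ring

lemma qPoch_succ (m : ℕ) : qPoch q x (m+1) = qPoch q x m * (1 - q^m * x) :=
  Finset.prod_range_succ _ _

lemma bern_rec (hq : 0 < q) (hq1 : q < 1) {k m : ℕ} (hk : k < m) :
    qBinom q (m+1) (k+1) * x^(k+1) * qPoch q x (m+1-(k+1))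
    = (1 - q^(m-(k+1)) * x) * (qBinom q m (k+1) * x^(k+1) * qPoch q x (m-(k+1)))
      + q^(m-k) * x * (qBinom q m k * x^k * qPoch q x (m-k)) := by
  obtain ⟨d, rfl⟩ : ∃ d, m = k+d+1 := ⟨m-k-1, by omega⟩
  rw [show k+d+1+1 = k+d+2 by omega, show k+d+2-(k+1) = d+1 by omega,
    show k+d+1-(k+1) = d by omega, show k+d+1-k = d+1 by omega,
    qBinom_pascal hq hq1, qPoch_succ]
  ring

lemma sum_rec (hq : 0 < q) (hq1 : q < 1) (c : ℕ → ℝ) (m : ℕ) :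
    ∑ k ∈ Finset.range (m+2), c k * (qBinom q (m+1) k * x^k * qPoch q x (m+1-k))
    = ∑ k ∈ Finset.range (m+1), (c k * (1 - q^(m-k)*x) + c (k+1) * q^(m-k) * x)
        * (qBinom q m k * x^k * qPoch q x (m-k)) := by
  have hRHS : ∑ k ∈ Finset.range (m+1), (c k * (1 - q^(m-k)*x) + c (k+1) * q^(m-k) * x)
        * (qBinom q m k * x^k * qPoch q x (m-k))
      = (∑ k ∈ Finset.range (m+1), c k * ((1 - q^(m-k)*x) * (qBinom q m k * x^k * qPoch q x (m-k))))
        + ∑ k ∈ Finset.range (m+1), c (k+1) * (q^(m-k) * x * (qBinom q m k * x^k * qPoch q x (m-k))) := by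
    rw [← Finset.sum_add_distrib]
    exact Finset.sum_congr rfl fun k _ => by ring
  rw [hRHS, Finset.sum_range_succ, Finset.sum_range_succ'
    (f := fun k => c k * (qBinom q (m+1) k * x^k * qPoch q x (m+1-k)))]
  rw [Finset.sum_range_succ'
    (f := fun k => c k * ((1 - q^(m-k)*x) * (qBinom q m k * x^k * qPoch q x (m-k))))]
  rw [Finset.sum_range_succ
    (f := fun k => c (k+1) * (q^(m-k) * x * (qBinom q m k * x^k * qPoch q x (m-k))))]
  have h0 : c 0 * (qBinom q (m+1) 0 * x^0 * qPoch q x (m+1-0))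
      = c 0 * ((1 - q^(m-0)*x) * (qBinom q m 0 * x^0 * qPoch q x (m-0))) := by
    rw [qBinom_zero hq hq1, qBinom_zero hq hq1, Nat.sub_zero, Nat.sub_zero, qPoch_succ]
    ring
  have hlast : c (m+1) * (qBinom q (m+1) (m+1) * x^(m+1) * qPoch q x (m+1-(m+1)))
      = c (m+1) * (q^(m-m) * x * (qBinom q m m * x^m * qPoch q x (m-m))) := by
    rw [qBinom_self hq hq1, qBinom_self hq hq1, Nat.sub_self, Nat.sub_self]
    rw [show qPoch q x 0 = (1:ℝ) by simp [qPoch]]; ring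
  have hmid : ∑ k ∈ Finset.range m, c (k+1) * (qBinom q (m+1) (k+1) * x^(k+1) * qPoch q x (m+1-(k+1)))
      = (∑ k ∈ Finset.range m, c (k+1) * ((1 - q^(m-(k+1))*x) * (qBinom q m (k+1) * x^(k+1) * qPoch q x (m-(k+1)))))
        + ∑ k ∈ Finset.range m, c (k+1) * (q^(m-k) * x * (qBinom q m k * x^k * qPoch q x (m-k))) := by
    rw [← Finset.sum_add_distrib]
    refine Finset.sum_congr rfl fun k hk => ?_
    rw [bern_rec hq hq1 (Finset.mem_range.mp hk)]; ring
  rw [h0, hlast, hmid]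
  ring

lemma sum_bern_one (hq : 0 < q) (hq1 : q < 1) (m : ℕ) :
    ∑ k ∈ Finset.range (m+1), qBinom q m k * x^k * qPoch q x (m-k) = 1 := by
  induction m with
  | zero => simp [qBinom, qFact, qPoch]
  | succ m ih =>
    have := sum_rec (x := x) hq hq1 (fun _ => 1) m
    simp only [one_mul] at this ⊢
    rw [show m+1+1 = m+2 by omega, this]
    have h2 : ∑ k ∈ Finset.range (m+1), (1 - q^(m-k)*x + q^(m-k)*x)
        * (qBinom q m k * x^k * qPoch q x (m-k))
        = ∑ k ∈ Finset.range (m+1), qBinom q m k * x^k * qPoch q x (m-k) :=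
      Finset.sum_congr rfl fun k _ => by ring
    rw [h2]; exact ih

lemma sum_bern_qpow (hq : 0 < q) (hq1 : q < 1) (m : ℕ) :
    ∑ k ∈ Finset.range (m+1), q^k * (qBinom q m k * x^k * qPoch q x (m-k))
      = 1 - (1 - q^m) * x := by
  induction m with
  | zero => simp [qBinom, qFact, qPoch]
  | succ m ih =>
    have hrec := sum_rec (x := x) hq hq1 (fun k => q^k) m
    rw [show m+1+1 = m+2 by omega, hrec]
    have : ∑ k ∈ Finset.range (m+1), (q^k * (1 - q^(m-k)*x) + q^(k+1) * q^(m-k) * x)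
        * (qBinom q m k * x^k * qPoch q x (m-k))
      = (∑ k ∈ Finset.range (m+1), q^k * (qBinom q m k * x^k * qPoch q x (m-k)))
        + (q^(m+1) - q^m) * x * ∑ k ∈ Finset.range (m+1), qBinom q m k * x^k * qPoch q x (m-k) := by
      rw [Finset.mul_sum, ← Finset.sum_add_distrib]
      refine Finset.sum_congr rfl fun k hk => ?_
      have hk' : k ≤ m := by have := Finset.mem_range.mp hk; omega
      have h1 : q^k * q^(m-k) = q^m := by rw [← pow_add]; congr 1; omega
      have h2 : q^(k+1) * q^(m-k) = q^(m+1) := by rw [← pow_add]; congr 1; omega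
      calc (q^k * (1 - q^(m-k)*x) + q^(k+1) * q^(m-k) * x) * (qBinom q m k * x^k * qPoch q x (m-k))
          = (q^k - q^k * q^(m-k)*x + q^(k+1) * q^(m-k) * x) * (qBinom q m k * x^k * qPoch q x (m-k)) := by ring
        _ = (q^k - q^m*x + q^(m+1) * x) * (qBinom q m k * x^k * qPoch q x (m-k)) := by rw [h1, h2]
        _ = _ := by ring
    rw [this, ih, sum_bern_one hq hq1]
    ring

lemma qRInt_id (hq : 0 < q) (hq1 : q < 1) (a b : ℝ) :
    qRInt q a b (fun t => t) = (b-a) * (a + (b-a)/(1+q)) := by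
  unfold qRInt
  have hq2 : q^2 < 1 := by nlinarith
  have h1q : (0:ℝ) < 1 + q := by linarith
  have hs1 : Summable (fun s : ℕ => a * q^s) :=
    (summable_geometric_of_lt_one hq.le hq1).mul_left a
  have hs2 : Summable (fun s : ℕ => (b-a) * (q^2)^s) :=
    (summable_geometric_of_lt_one (by positivity) hq2).mul_left (b-a)
  have hpow : ∀ s : ℕ, (q^2)^s = q^s * q^s := fun s => by
    rw [← pow_mul, two_mul, pow_add]
  have hts : ∑' s : ℕ, (a + (b-a)*q^s) * q^s
      = a * (1-q)⁻¹ + (b-a) * (1-q^2)⁻¹ := by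
    have h1 : ∑' s : ℕ, (a + (b-a)*q^s) * q^s
        = ∑' s : ℕ, (a * q^s + (b-a) * (q^2)^s) :=
      tsum_congr fun s => by rw [hpow]; ring
    rw [h1, Summable.tsum_add hs1 hs2, tsum_mul_left, tsum_mul_left,
      tsum_geometric_of_lt_one hq.le hq1,
      tsum_geometric_of_lt_one (by positivity) hq2]
  rw [hts]
  have hqne : (1:ℝ) - q ≠ 0 := by linarith
  have hq2ne : (1:ℝ) - q^2 ≠ 0 := by nlinarith
  field_simp
  ring

lemma sum_bern_qInt (hq : 0 < q) (hq1 : q < 1) (m : ℕ) :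
    ∑ k ∈ Finset.range (m+1), (qBinom q m k * x^k * qPoch q x (m-k)) * qInt q k
      = qInt q m * x := by
  have hqne : (1:ℝ) - q ≠ 0 := by linarith
  have h1 : ∑ k ∈ Finset.range (m+1), (qBinom q m k * x^k * qPoch q x (m-k)) * qInt q k
      = ∑ k ∈ Finset.range (m+1), ((qBinom q m k * x^k * qPoch q x (m-k))
          - q^k * (qBinom q m k * x^k * qPoch q x (m-k))) / (1-q) := by
    refine Finset.sum_congr rfl fun k _ => ?_
    simp only [qInt]; field_simp
  rw [h1, ← Finset.sum_div, Finset.sum_sub_distrib, sum_bern_one hq hq1,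
    sum_bern_qpow hq hq1]
  simp only [qInt]; field_simp
  ring

theorem Lop_id' (q α β : ℝ) (hq : 0 < q) (hq1 : q < 1) (hβ : 0 < β) (hβα : β ≤ α)
    (n l : ℕ) (x : ℝ) (hx0 : 0 ≤ x) (hx1 : x ≤ 1) :
    (qInt q (n + 1) + β) * ∑ k ∈ Finset.range (n + l + 1),
      (qBinom q (n+l) k * x^k * qPoch q x (n+l-k)) * (q ^ k)⁻¹ *
        qRInt q ((qInt q k + α) / (qInt q (n + 1) + β))
          ((qInt q (k + 1) + α) / (qInt q (n + 1) + β)) (fun t => t) =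
      α / (qInt q (n + 1) + β) + 1 / ((qInt q (n + 1) + β) * (1 + q))
        + 2 * q * qInt q (n + l) / ((qInt q (n + 1) + β) * (1 + q)) * x := by
  have hqne : (1:ℝ) - q ≠ 0 := by linarith
  have h1q : (0:ℝ) < 1 + q := by linarith
  set D : ℝ := qInt q (n+1) + β with hD
  have hDpos : 0 < D := by
    have := qInt_pos hq hq1 (n+1) (Nat.succ_pos n); linarith
  have hDne : D ≠ 0 := hDpos.ne'
  have hqInt1 : qInt q 1 = 1 := by simp only [qInt, pow_one]; field_simp
  have hsucc : ∀ k : ℕ, qInt q (k+1) = qInt q k + q^k := fun k => by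
    rw [qInt_add hq1.ne k 1, hqInt1, mul_one]
  have key : ∀ k : ℕ,
      (qBinom q (n+l) k * x^k * qPoch q x (n+l-k)) * (q ^ k)⁻¹ *
        qRInt q ((qInt q k + α) / D) ((qInt q (k+1) + α) / D) (fun t => t)
      = (qBinom q (n+l) k * x^k * qPoch q x (n+l-k)) * qInt q k * (D*D)⁻¹
        + (qBinom q (n+l) k * x^k * qPoch q x (n+l-k)) * (α * (D*D)⁻¹)
        + q^k * (qBinom q (n+l) k * x^k * qPoch q x (n+l-k)) * (D*D*(1+q))⁻¹ := by
    intro k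
    rw [qRInt_id hq hq1]
    have hba : (qInt q (k+1) + α) / D - (qInt q k + α) / D = q^k / D := by
      rw [hsucc k]; ring
    rw [hba]
    have hqk : q^k ≠ 0 := by positivity
    field_simp
  rw [Finset.sum_congr rfl (fun k _ => key k), Finset.sum_add_distrib,
    Finset.sum_add_distrib, ← Finset.sum_mul, ← Finset.sum_mul, ← Finset.sum_mul,
    sum_bern_qInt hq hq1, sum_bern_one hq hq1, sum_bern_qpow hq hq1]
  have hI : (1 - q) * qInt q (n+l) = 1 - q^(n+l) := by
    simp only [qInt]; field_simp
  rw [← hI]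
  field_simp
  ring

theorem Lop_id (q α β : ℝ) (hq : 0 < q) (hq1 : q < 1) (hβ : 0 < β) (hβα : β ≤ α)
    (n l : ℕ) (x : ℝ) (hx0 : 0 ≤ x) (hx1 : x ≤ 1) :
    Lop q α β n l (fun t => t) x =
      α / (qInt q (n + 1) + β) + 1 / ((qInt q (n + 1) + β) * (1 + q))
        + 2 * q * qInt q (n + l) / ((qInt q (n + 1) + β) * (1 + q)) * x := by
  unfold Lop bern
  exact Lop_id' q α β hq hq1 hβ hβα n l x hx0 hx1
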